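/- For every countably infinite group G, there exists a family 𝔉 of nonempty subsets of G with |𝔉| = 2^ℵ₀ such that any two distinct members of 𝔉 are not coarsely equivalent as subsets of G. -/

import Mathlib

open Pointwise

/-- The ball `B_X(x, F) = ((F·x) ∪ {x}) ∩ X` in a subset `X` of a group `G`. -/
def ballIn {G : Type*} [Group G] (X : Set G) (F : Finset G) (x : G) : Set G :=
  ((F : Set G) * {x} ∪ {x}) ∩ X

/-- A bijection `f : X ≃ X'` between subsets of a group `G` is an asymorphism if
it is coarse in both directions. -/
def IsAsymorphism {G : Type*} [Group G] (X X' : Set G) (f : X ≃ X') : Prop :=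
  (∀ F : Finset G, ∃ F' : Finset G, ∀ x y : X,
      (y : G) ∈ (F : Set G) * {(x : G)} ∪ {(x : G)} →
      (f y : G) ∈ (F' : Set G) * {(f x : G)} ∪ {(f x : G)}) ∧
  (∀ F : Finset G, ∃ F' : Finset G, ∀ x y : X',
      (y : G) ∈ (F : Set G) * {(x : G)} ∪ {(x : G)} →
      (f.symm y : G) ∈ (F' : Set G) * {(f.symm x : G)} ∪ {(f.symm x : G)})

/-- `Y` is a large subset of `X` (subsets of a group `G`). -/
def LargeIn {G : Type*} [Group G] (Y X : Set G) : Prop :=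
  Y ⊆ X ∧ ∃ F : Finset G, X ⊆ (F : Set G) * Y ∪ Y

/-- Subsets `X, X'` of a group `G` are coarsely equivalent if some large subsets
of each are asymorphic. -/
def CoarselyEquiv {G : Type*} [Group G] (X X' : Set G) : Prop :=
  ∃ Y Y' : Set G, LargeIn Y X ∧ LargeIn Y' X' ∧ ∃ f : Y ≃ Y', IsAsymorphism Y Y' f


set_option linter.unusedSectionVars false

namespace CGP

lemma ncard_le_mul_of_maps_fibers {α β : Type*} {s : Set α} {t : Set β} (hs : s.Finite)
    (ht : t.Finite) (σ : α → β) (hmap : ∀ a ∈ s, σ a ∈ t) {k : ℕ}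
    (hfib : ∀ b, {a ∈ s | σ a = b}.ncard ≤ k) : s.ncard ≤ k * t.ncard := by
  classical
  have himg : (Finset.image σ hs.toFinset) ⊆ ht.toFinset := by
    intro b hb
    obtain ⟨a, ha, rfl⟩ := Finset.mem_image.mp hb
    exact ht.mem_toFinset.mpr (hmap a (hs.mem_toFinset.mp ha))
  have hmain := Finset.card_le_mul_card_image (f := σ) hs.toFinset k ?_
  · calc s.ncard = hs.toFinset.card := Set.ncard_eq_toFinset_card _ hs
      _ ≤ k * (Finset.image σ hs.toFinset).card := hmain
      _ ≤ k * ht.toFinset.card := Nat.mul_le_mul_left _ (Finset.card_le_card himg)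
      _ = k * t.ncard := by rw [Set.ncard_eq_toFinset_card _ ht]
  · intro b _
    have hset : ((hs.toFinset.filter (fun a => σ a = b)) : Set α) = {a ∈ s | σ a = b} := by
      ext a; simp [Set.Finite.mem_toFinset]
    calc (hs.toFinset.filter (fun a => σ a = b)).card
        = ({a ∈ s | σ a = b} : Set α).ncard := by rw [← hset, Set.ncard_coe_finset]
      _ ≤ k := hfib b

lemma infinite_image_of_fibers_finite {α β : Type*} {s : Set α} (σ : α → β)
    (hs : s.Infinite) (hfib : ∀ b, {a ∈ s | σ a = b}.Finite) : (σ '' s).Infinite := by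
  intro hfin
  have hsub : s ⊆ ⋃ b ∈ σ '' s, {a ∈ s | σ a = b} := by
    intro a ha
    exact Set.mem_biUnion (Set.mem_image_of_mem σ ha) ⟨ha, rfl⟩
  exact hs (Set.Finite.subset (Set.Finite.biUnion hfin (fun b _ => hfib b)) hsub)

variable {G : Type*} [Group G]

lemma finite_ballIn (X : Set G) (F : Finset G) (x : G) : (ballIn X F x).Finite :=
  Set.Finite.subset (Set.Finite.union ((F.finite_toSet).mul (Set.finite_singleton x))
    (Set.finite_singleton x)) Set.inter_subset_left

lemma mem_blob {F : Finset G} {x z : G} :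
    z ∈ (F : Set G) * {x} ∪ {x} ↔ z = x ∨ ∃ f ∈ F, z = f * x := by
  constructor
  · rintro (h | h)
    · rw [Set.mul_singleton] at h
      obtain ⟨f, hf, rfl⟩ := h
      exact Or.inr ⟨f, by simpa using hf, rfl⟩
    · exact Or.inl h
  · rintro (rfl | ⟨f, hf, rfl⟩)
    · exact Or.inr rfl
    · exact Or.inl (by rw [Set.mul_singleton]; exact ⟨f, by simpa using hf, rfl⟩)

lemma blob_mono {F F' : Finset G} (h : F ⊆ F') {x z : G}
    (hz : z ∈ (F : Set G) * {x} ∪ {x}) : z ∈ (F' : Set G) * {x} ∪ {x} := by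
  rw [mem_blob] at hz ⊢
  rcases hz with h1 | ⟨f, hf, rfl⟩
  · exact Or.inl h1
  · exact Or.inr ⟨f, h hf, rfl⟩

lemma mem_ballIn {X : Set G} {F : Finset G} {x z : G} :
    z ∈ ballIn X F x ↔ (z = x ∨ ∃ f ∈ F, z = f * x) ∧ z ∈ X := by
  rw [ballIn, Set.mem_inter_iff, mem_blob]

lemma ballIn_mono_scale {X : Set G} {F F' : Finset G} (h : F ⊆ F') (x : G) :
    ballIn X F x ⊆ ballIn X F' x := fun _ hz => ⟨blob_mono h hz.1, hz.2⟩

/-- the window invariant: there is a scale `Φ` such that for every larger scale `Ψ`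
there are infinitely many points whose `Φ`-ball already has `≥ c/lam` points while
the `Ψ`-ball still has `≤ lam * c` points. -/
def Wreg (X : Set G) (lam c : ℕ) : Prop :=
  ∃ Φ : Finset G, ∀ Ψ : Finset G, Φ ⊆ Ψ →
    {x | x ∈ X ∧ c ≤ lam * (ballIn X Φ x).ncard ∧ (ballIn X Ψ x).ncard ≤ lam * c}.Infinite

lemma W_of_asym {Y Y' : Set G} (f : Y ≃ Y') (hf : IsAsymorphism Y Y' f) {lam c : ℕ}
    (h : Wreg Y lam c) : Wreg Y' lam c := by
  classical
  obtain ⟨Φ, hΦ⟩ := h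
  obtain ⟨Φ', hΦ'⟩ := hf.1 Φ
  refine ⟨Φ', fun Ψ' hΨ' => ?_⟩
  obtain ⟨Ψ₀, hΨ₀⟩ := hf.2 Ψ'
  have hW := hΦ (Φ ∪ Ψ₀) Finset.subset_union_left
  set g : G → G := fun z => if h : z ∈ Y then ((f ⟨z, h⟩ : Y') : G) else 1 with hg
  have hgY : ∀ z (hz : z ∈ Y), g z = ((f ⟨z, hz⟩ : Y') : G) := by
    intro z hz; simp only [hg, dif_pos hz]
  have hinj : Set.InjOn g Y := by
    intro a ha b hb hab
    rw [hgY a ha, hgY b hb] at hab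
    have := f.injective (Subtype.coe_injective hab)
    exact congrArg Subtype.val this
  have himg := hW.image (hinj.mono (fun a ha => ha.1))
  refine Set.Infinite.mono ?_ himg
  rintro _ ⟨a, ⟨haY, hlow, hup⟩, rfl⟩
  have hga : g a = ((f ⟨a, haY⟩ : Y') : G) := hgY a haY
  refine ⟨by rw [hga]; exact (f ⟨a, haY⟩).2, ?_, ?_⟩
  · have hcard : (ballIn Y Φ a).ncard ≤ (ballIn Y' Φ' (g a)).ncard := by
      refine Set.ncard_le_ncard_of_injOn g ?_ (hinj.mono (fun z hz => hz.2))
        (finite_ballIn _ _ _)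
      intro z hz
      have h2 := hΦ' ⟨a, haY⟩ ⟨z, hz.2⟩ hz.1
      refine ⟨?_, ?_⟩
      · rw [hgY z hz.2, hga]; exact h2
      · rw [hgY z hz.2]; exact (f ⟨z, hz.2⟩).2
    calc c ≤ lam * (ballIn Y Φ a).ncard := hlow
      _ ≤ lam * (ballIn Y' Φ' (g a)).ncard := Nat.mul_le_mul_left _ hcard
  · set g' : G → G := fun z => if h : z ∈ Y' then ((f.symm ⟨z, h⟩ : Y) : G) else 1 with hg'
    have hg'Y : ∀ z (hz : z ∈ Y'), g' z = ((f.symm ⟨z, hz⟩ : Y) : G) := by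
      intro z hz; simp only [hg', dif_pos hz]
    have hinj' : Set.InjOn g' Y' := by
      intro u hu v hv huv
      rw [hg'Y u hu, hg'Y v hv] at huv
      have := f.symm.injective (Subtype.coe_injective huv)
      exact congrArg Subtype.val this
    have hcard : (ballIn Y' Ψ' (g a)).ncard ≤ (ballIn Y (Φ ∪ Ψ₀) a).ncard := by
      refine Set.ncard_le_ncard_of_injOn g' ?_ (hinj'.mono (fun z hz => hz.2))
        (finite_ballIn _ _ _)
      intro z hz
      have hz1 : (z : G) ∈ (Ψ' : Set G) * {((f ⟨a, haY⟩ : Y') : G)} ∪ {((f ⟨a, haY⟩ : Y') : G)} := by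
        rw [← hga]; exact hz.1
      have h2 := hΨ₀ (f ⟨a, haY⟩) ⟨z, hz.2⟩ hz1
      rw [Equiv.symm_apply_apply] at h2
      refine ⟨blob_mono Finset.subset_union_right ?_, ?_⟩
      · rw [hg'Y z hz.2]; exact h2
      · rw [hg'Y z hz.2]; exact (f.symm ⟨z, hz.2⟩).2
    calc (ballIn Y' Ψ' (g a)).ncard ≤ (ballIn Y (Φ ∪ Ψ₀) a).ncard := hcard
      _ ≤ lam * c := hup

section Large

variable [DecidableEq G] {X Y : Set G} {F₀ : Finset G}

/-- selector towards the large subset -/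
lemma exists_selector (hL : X ⊆ (F₀ : Set G) * Y ∪ Y) :
    ∃ σ : G → G, ∀ z, z ∈ X → (σ z ∈ Y ∧ ∃ w ∈ insert (1 : G) F₀, z = w * σ z) := by
  classical
  have hsel : ∀ z : G, ∃ y : G, z ∈ X → (y ∈ Y ∧ ∃ w ∈ insert (1 : G) F₀, z = w * y) := by
    intro z
    by_cases hz : z ∈ X
    · rcases hL hz with hmul | hY
      · rw [Set.mem_mul] at hmul
        obtain ⟨w, hw, y, hy, hwy⟩ := hmul
        exact ⟨y, fun _ => ⟨hy, ⟨w, Finset.mem_insert_of_mem (by simpa using hw), hwy.symm⟩⟩⟩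
      · exact ⟨z, fun _ => ⟨hY, ⟨1, Finset.mem_insert_self _ _, (one_mul z).symm⟩⟩⟩
    · exact ⟨1, fun h => absurd h hz⟩
  choose σ hσ using hsel
  exact ⟨σ, hσ⟩

lemma fiber_ncard_le (σ : G → G)
    (hσ : ∀ z, z ∈ X → (σ z ∈ Y ∧ ∃ w ∈ insert (1 : G) F₀, z = w * σ z))
    {s : Set G} (hs : s ⊆ X) (b : G) : {z ∈ s | σ z = b}.ncard ≤ F₀.card + 1 := by
  classical
  have hsub : {z ∈ s | σ z = b} ⊆ ((insert (1 : G) F₀ : Finset G) : Set G) * {b} := by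
    rintro z ⟨hzs, hzb⟩
    obtain ⟨_, w, hw, hzw⟩ := hσ z (hs hzs)
    have hzwb : z = w * b := by rw [← hzb]; exact hzw
    rw [hzwb]
    exact Set.mul_mem_mul (by simpa using hw) (Set.mem_singleton b)
  calc {z ∈ s | σ z = b}.ncard
      ≤ (((insert (1 : G) F₀ : Finset G) : Set G) * {b}).ncard :=
        Set.ncard_le_ncard hsub (((insert (1 : G) F₀).finite_toSet).mul (Set.finite_singleton b))
    _ = ((insert (1 : G) F₀ : Finset G) : Set G).ncard := by
        rw [Set.mul_singleton]
        exact Set.ncard_image_of_injective _ (fun u v h => mul_right_cancel h)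
    _ = (insert (1 : G) F₀).card := Set.ncard_coe_finset _
    _ ≤ F₀.card + 1 := Finset.card_insert_le _ _

lemma fiber_finite (σ : G → G)
    (hσ : ∀ z, z ∈ X → (σ z ∈ Y ∧ ∃ w ∈ insert (1 : G) F₀, z = w * σ z))
    {s : Set G} (hs : s ⊆ X) (b : G) : {z ∈ s | σ z = b}.Finite := by
  classical
  apply Set.Finite.subset (((insert (1 : G) F₀).finite_toSet).mul (Set.finite_singleton b))
  rintro z ⟨hzs, hzb⟩
  obtain ⟨_, w, hw, hzw⟩ := hσ z (hs hzs)
  have hzwb : z = w * b := by rw [← hzb]; exact hzw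
  rw [hzwb]
  exact Set.mul_mem_mul (by simpa using hw) (Set.mem_singleton b)

lemma W_of_large_down (hYX : Y ⊆ X) (hL : X ⊆ (F₀ : Set G) * Y ∪ Y) {lam c : ℕ}
    (h : Wreg X lam c) : Wreg Y (lam * (F₀.card + 1)) c := by
  classical
  obtain ⟨σ, hσ⟩ := exists_selector hL
  obtain ⟨Φ, hΦ⟩ := h
  set k := F₀.card + 1 with hk
  set W₀ : Finset G := insert (1 : G) F₀ with hW₀
  set ΦY : Finset G := W₀⁻¹ * (insert (1 : G) Φ) * W₀ with hΦY
  refine ⟨ΦY, fun ΨY hΨY => ?_⟩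
  set ΨX : Finset G := Φ ∪ (insert (1 : G) ΨY) * W₀⁻¹ with hΨX
  have hW := hΦ ΨX Finset.subset_union_left
  have himg := infinite_image_of_fibers_finite σ hW
    (fun b => fiber_finite σ hσ (fun z hz => hz.1) b)
  refine Set.Infinite.mono ?_ himg
  rintro _ ⟨x, ⟨hxX, hlow, hup⟩, rfl⟩
  obtain ⟨hσxY, w, hw, hxw⟩ := hσ x hxX
  refine ⟨hσxY, ?_, ?_⟩
  · -- lower bound
    have hcount : (ballIn X Φ x).ncard ≤ k * (ballIn Y ΦY (σ x)).ncard := by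
      refine ncard_le_mul_of_maps_fibers (finite_ballIn _ _ _) (finite_ballIn _ _ _) σ ?_
        (fun b => fiber_ncard_le σ hσ (fun z hz => hz.2) b)
      intro z hz
      obtain ⟨hzσY, wz, hwz, hzwz⟩ := hσ z hz.2
      have hφ : ∃ φ ∈ insert (1 : G) Φ, z = φ * x := by
        rcases mem_ballIn.mp hz with ⟨(rfl | ⟨f, hf, rfl⟩), _⟩
        · exact ⟨1, Finset.mem_insert_self _ _, (one_mul _).symm⟩
        · exact ⟨f, Finset.mem_insert_of_mem hf, rfl⟩
      obtain ⟨φ, hφmem, hzφ⟩ := hφ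
      refine mem_ballIn.mpr ⟨Or.inr ⟨wz⁻¹ * φ * w, ?_, ?_⟩, hzσY⟩
      · exact Finset.mul_mem_mul (Finset.mul_mem_mul (Finset.inv_mem_inv hwz) hφmem) hw
      · have h1 : σ z = wz⁻¹ * z := by
          conv_rhs => rw [hzwz]
          group
        have hσx : σ x = w⁻¹ * x := by
          conv_rhs => rw [hxw]
          group
        rw [h1, hσx, hzφ]
        group
    calc c ≤ lam * (ballIn X Φ x).ncard := hlow
      _ ≤ lam * (k * (ballIn Y ΦY (σ x)).ncard) := Nat.mul_le_mul_left _ hcount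
      _ = lam * k * (ballIn Y ΦY (σ x)).ncard := (Nat.mul_assoc _ _ _).symm
  · -- upper bound
    have hsub : ballIn Y ΨY (σ x) ⊆ ballIn X ΨX x := by
      intro z hz
      have hψ : ∃ ψ ∈ insert (1 : G) ΨY, z = ψ * σ x := by
        rcases mem_ballIn.mp hz with ⟨(rfl | ⟨f, hf, rfl⟩), _⟩
        · exact ⟨1, Finset.mem_insert_self _ _, (one_mul _).symm⟩
        · exact ⟨f, Finset.mem_insert_of_mem hf, rfl⟩
      obtain ⟨ψ, hψmem, hzψ⟩ := hψ
      refine mem_ballIn.mpr ⟨Or.inr ⟨ψ * w⁻¹, ?_, ?_⟩, hYX hz.2⟩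
      · exact Finset.mem_union_right _ (Finset.mul_mem_mul hψmem (Finset.inv_mem_inv hw))
      · have hσx : σ x = w⁻¹ * x := by
          conv_rhs => rw [hxw]
          group
        rw [hzψ, hσx]
        group
    calc (ballIn Y ΨY (σ x)).ncard ≤ (ballIn X ΨX x).ncard :=
          Set.ncard_le_ncard hsub (finite_ballIn _ _ _)
      _ ≤ lam * c := hup
      _ ≤ lam * k * c := Nat.mul_le_mul_right _ (Nat.le_mul_of_pos_right _ (Nat.succ_pos _))

lemma W_of_large_up (hYX : Y ⊆ X) (hL : X ⊆ (F₀ : Set G) * Y ∪ Y) {lam c : ℕ}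
    (h : Wreg Y lam c) : Wreg X (lam * (F₀.card + 1)) c := by
  classical
  obtain ⟨σ, hσ⟩ := exists_selector hL
  obtain ⟨Φ, hΦ⟩ := h
  set k := F₀.card + 1 with hk
  set W₀ : Finset G := insert (1 : G) F₀ with hW₀
  refine ⟨Φ, fun ΨX hΨX => ?_⟩
  set ΨY : Finset G := Φ ∪ W₀⁻¹ * (insert (1 : G) ΨX) with hΨY
  have hW := hΦ ΨY Finset.subset_union_left
  refine Set.Infinite.mono ?_ hW
  rintro y ⟨hyY, hlow, hup⟩
  refine ⟨hYX hyY, ?_, ?_⟩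
  · have hsub : ballIn Y Φ y ⊆ ballIn X Φ y := fun z hz => ⟨hz.1, hYX hz.2⟩
    calc c ≤ lam * (ballIn Y Φ y).ncard := hlow
      _ ≤ lam * (ballIn X Φ y).ncard :=
          Nat.mul_le_mul_left _ (Set.ncard_le_ncard hsub (finite_ballIn _ _ _))
      _ ≤ lam * k * (ballIn X Φ y).ncard :=
          Nat.mul_le_mul_right _ (Nat.le_mul_of_pos_right _ (Nat.succ_pos _))
  · have hcount : (ballIn X ΨX y).ncard ≤ k * (ballIn Y ΨY y).ncard := by
      refine ncard_le_mul_of_maps_fibers (finite_ballIn _ _ _) (finite_ballIn _ _ _) σ ?_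
        (fun b => fiber_ncard_le σ hσ (fun z hz => hz.2) b)
      intro z hz
      obtain ⟨hzσY, wz, hwz, hzwz⟩ := hσ z hz.2
      have hψ : ∃ ψ ∈ insert (1 : G) ΨX, z = ψ * y := by
        rcases mem_ballIn.mp hz with ⟨(rfl | ⟨f, hf, rfl⟩), _⟩
        · exact ⟨1, Finset.mem_insert_self _ _, (one_mul _).symm⟩
        · exact ⟨f, Finset.mem_insert_of_mem hf, rfl⟩
      obtain ⟨ψ, hψmem, hzψ⟩ := hψ
      refine mem_ballIn.mpr ⟨Or.inr ⟨wz⁻¹ * ψ, ?_, ?_⟩, hzσY⟩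
      · exact Finset.mem_union_right _ (Finset.mul_mem_mul (Finset.inv_mem_inv hwz) hψmem)
      · have h1 : σ z = wz⁻¹ * z := by
          conv_rhs => rw [hzwz]
          group
        rw [h1, hzψ]
        group
    calc (ballIn X ΨX y).ncard ≤ k * (ballIn Y ΨY y).ncard := hcount
      _ ≤ k * (lam * c) := Nat.mul_le_mul_left _ hup
      _ = lam * k * c := by ring

end Large

lemma W_transfer {X X' : Set G} (hCE : CoarselyEquiv X X') :
    ∃ k : ℕ, 1 ≤ k ∧ ∀ c, Wreg X 1 c → Wreg X' k c := by
  classical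
  obtain ⟨Y, Y', ⟨hYX, F₁, hF₁⟩, ⟨hY'X', F₂, hF₂⟩, f, hf⟩ := hCE
  refine ⟨1 * (F₁.card + 1) * (F₂.card + 1), ?_, fun c h => ?_⟩
  · have : 0 < 1 * (F₁.card + 1) * (F₂.card + 1) := by positivity
    omega
  · exact W_of_large_up hY'X' hF₂ (W_of_asym f hf (W_of_large_down hYX hF₁ h))

end CGP

namespace CGP

section Clusters

variable {G : Type*} [Group G] [DecidableEq G] [Infinite G]

/-- cluster type of the `n`-th cluster -/
def tau (n : ℕ) : ℕ := (Nat.unpair n).1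

lemma tau_fiber_infinite (u : ℕ) : {n | tau n = u}.Infinite := by
  apply Set.infinite_of_injective_forall_mem (f := fun i : ℕ => Nat.pair u i)
  · intro i j h
    simpa using congrArg (fun p => (Nat.unpair p).2) h
  · intro i
    simp [tau, Nat.unpair_pair]

variable (K E : ℕ → Finset G)

/-- the base points of the clusters, chosen recursively very far apart -/
noncomputable def xs : ℕ → G
  | n =>
    Classical.choose (Infinite.exists_notMem_finset
      ((Finset.range n).attach.biUnion (fun m =>
        (K (tau n))⁻¹ * E n * (K (tau m.1) * {xs m.1}))))
  termination_by n => n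
  decreasing_by
    all_goals exact Finset.mem_range.mp m.2

lemma xs_spec (n : ℕ) :
    xs K E n ∉ (Finset.range n).attach.biUnion (fun m =>
      (K (tau n))⁻¹ * E n * (K (tau m.1) * {xs K E m.1})) := by
  rw [xs.eq_def]
  exact Classical.choose_spec (Infinite.exists_notMem_finset
    ((Finset.range n).attach.biUnion (fun m =>
      (K (tau n))⁻¹ * E n * (K (tau m.1) * {xs K E m.1}))))

variable (hK1 : ∀ u, (1 : G) ∈ K u) (hE1 : ∀ n, (1 : G) ∈ E n)
  (hEmono : ∀ {m n : ℕ}, m ≤ n → E m ⊆ E n) (hEsymm : ∀ n, (E n)⁻¹ = E n)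
  (hEexh : ∀ F : Finset G, ∃ N, F ⊆ E N)

include hK1 hE1 in
lemma xs_injective : Function.Injective (xs K E) := by
  intro m n h
  by_contra hne
  wlog hlt : m < n generalizing m n
  · exact this h.symm (Ne.symm hne) (by omega)
  apply xs_spec K E n
  apply Finset.mem_biUnion.mpr
  refine ⟨⟨m, Finset.mem_range.mpr hlt⟩, Finset.mem_attach _ _, ?_⟩
  have : xs K E n = 1⁻¹ * 1 * (1 * xs K E m) := by rw [← h]; group
  rw [this]
  exact Finset.mul_mem_mul (Finset.mul_mem_mul (Finset.inv_mem_inv (hK1 _)) (hE1 _))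
    (Finset.mul_mem_mul (hK1 _) (Finset.mem_singleton_self _))

include hEmono hEsymm hEexh in
lemma sep_core (F : Finset G) : ∃ N, ∀ {n m : ℕ}, m < n → N ≤ n →
    ∀ a ∈ K (tau n), ∀ b ∈ K (tau m), ∀ g ∈ F,
      a * xs K E n ≠ g * (b * xs K E m) ∧ b * xs K E m ≠ g * (a * xs K E n) := by
  obtain ⟨N, hN⟩ := hEexh F
  refine ⟨N, fun {n m} hlt hNn a ha b hb g hg => ?_⟩
  have hgE : g ∈ E n := hEmono (le_trans hNn (le_refl n)) (hN hg)
  have hgE' : g⁻¹ ∈ E n := by rw [← hEsymm n]; exact Finset.inv_mem_inv hgE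
  constructor
  · intro heq
    apply xs_spec K E n
    apply Finset.mem_biUnion.mpr
    refine ⟨⟨m, Finset.mem_range.mpr hlt⟩, Finset.mem_attach _ _, ?_⟩
    have : xs K E n = a⁻¹ * g * (b * xs K E m) := by
      have := congrArg (fun z => a⁻¹ * z) heq
      simpa [mul_assoc] using this
    rw [this]
    exact Finset.mul_mem_mul (Finset.mul_mem_mul (Finset.inv_mem_inv ha) hgE)
      (Finset.mul_mem_mul hb (Finset.mem_singleton_self _))
  · intro heq
    apply xs_spec K E n
    apply Finset.mem_biUnion.mpr
    refine ⟨⟨m, Finset.mem_range.mpr hlt⟩, Finset.mem_attach _ _, ?_⟩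
    have h2 : a * xs K E n = g⁻¹ * (b * xs K E m) := by
      rw [heq]; group
    have : xs K E n = a⁻¹ * g⁻¹ * (b * xs K E m) := by
      have := congrArg (fun z => a⁻¹ * z) h2
      simpa [mul_assoc] using this
    rw [this]
    exact Finset.mul_mem_mul (Finset.mul_mem_mul (Finset.inv_mem_inv ha) hgE')
      (Finset.mul_mem_mul hb (Finset.mem_singleton_self _))

include hEmono hEsymm hEexh in
lemma sep_blob (F : Finset G) : ∃ N, ∀ {n m : ℕ}, m ≠ n → N ≤ max m n →
    ∀ a ∈ K (tau n), ∀ b ∈ K (tau m),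
      (b * xs K E m : G) ∉ (F : Set G) * {a * xs K E n} ∪ {a * xs K E n} := by
  classical
  obtain ⟨N, hN⟩ := sep_core K E hEmono hEsymm hEexh (insert (1 : G) F)
  refine ⟨N, fun {n m} hne hNmax a ha b hb hmem => ?_⟩
  have hmem' : ∃ g ∈ insert (1 : G) F, b * xs K E m = g * (a * xs K E n) := by
    rcases mem_blob.mp hmem with h | ⟨f, hf, h⟩
    · exact ⟨1, Finset.mem_insert_self _ _, by rw [h, one_mul]⟩
    · exact ⟨f, Finset.mem_insert_of_mem hf, h⟩
  obtain ⟨g, hg, heq⟩ := hmem'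
  rcases lt_or_gt_of_ne hne with hlt | hlt
  · exact (hN hlt (by omega) a ha b hb g hg).2 heq
  · exact (hN hlt (by omega) b hb a ha g hg).1 heq

/-- the cluster set associated to a set of types -/
def Xset (S : Set ℕ) : Set G := { g | ∃ n, tau n ∈ S ∧ ∃ a ∈ K (tau n), g = a * xs K E n }

lemma cluster_ncard (n : ℕ) : ((K (tau n) : Set G) * {xs K E n}).ncard = (K (tau n)).card := by
  rw [Set.mul_singleton, Set.ncard_image_of_injective _ (fun u v h => mul_right_cancel h),
    Set.ncard_coe_finset]

include hK1 hE1 hEmono hEsymm hEexh in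
lemma claimA (S : Set ℕ) {s : ℕ} (hs : s ∈ S) : Wreg (Xset K E S) 1 ((K s).card) := by
  classical
  refine ⟨K s * (K s)⁻¹, fun Ψ hΨ => ?_⟩
  obtain ⟨N, hN⟩ := sep_blob K E hEmono hEsymm hEexh Ψ
  have hidx : ({n | tau n = s} \ {n | n < N}).Infinite :=
    ((tau_fiber_infinite s).diff (Set.finite_Iio N))
  have himg := hidx.image ((xs_injective K E hK1 hE1).injOn)
  refine Set.Infinite.mono ?_ himg
  rintro _ ⟨n, ⟨htn, hnN⟩, rfl⟩
  simp only [Set.mem_setOf_eq, Set.mem_Iio, not_lt] at htn hnN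
  have hxX : xs K E n ∈ Xset K E S := ⟨n, htn ▸ hs, 1, hK1 _, (one_mul _).symm⟩
  have hsubCl : (K (tau n) : Set G) * {xs K E n} ⊆ ballIn (Xset K E S) (K s * (K s)⁻¹) (xs K E n) := by
    intro z hz
    rw [Set.mul_singleton] at hz
    obtain ⟨a, ha, rfl⟩ := hz
    refine mem_ballIn.mpr ⟨Or.inr ⟨a, ?_, rfl⟩, ⟨n, htn ▸ hs, a, by simpa using ha, rfl⟩⟩
    have : a = a * 1⁻¹ := by group
    rw [this]
    exact Finset.mul_mem_mul (htn ▸ (by simpa using ha)) (Finset.inv_mem_inv (hK1 s))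
  have hsupCl : ballIn (Xset K E S) Ψ (xs K E n) ⊆ (K (tau n) : Set G) * {xs K E n} := by
    intro z hz
    obtain ⟨hblob, m, htm, b, hbm, rfl⟩ := hz
    by_cases hmn : m = n
    · subst hmn
      rw [Set.mul_singleton]
      exact ⟨b, by simpa using hbm, rfl⟩
    · exfalso
      have hone : (b * xs K E m : G) ∈ (Ψ : Set G) * {1 * xs K E n} ∪ {1 * xs K E n} := by
        rw [one_mul]; exact hblob
      exact hN hmn (le_trans hnN (le_max_right m n)) 1 (hK1 _) b hbm hone
  constructor
  · exact hxX
  constructor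
  · rw [one_mul]
    calc (K s).card = ((K (tau n) : Set G) * {xs K E n}).ncard := by
          rw [cluster_ncard, htn]
      _ ≤ (ballIn (Xset K E S) (K s * (K s)⁻¹) (xs K E n)).ncard :=
          Set.ncard_le_ncard hsubCl (finite_ballIn _ _ _)
  · rw [one_mul]
    calc (ballIn (Xset K E S) Ψ (xs K E n)).ncard
        ≤ ((K (tau n) : Set G) * {xs K E n}).ncard :=
          Set.ncard_le_ncard hsupCl (((K (tau n)).finite_toSet).mul (Set.finite_singleton _))
      _ = (K s).card := by rw [cluster_ncard, htn]

include hK1 hE1 hEmono hEsymm hEexh in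
lemma claimB (S' : Set ℕ)
    (HB : ∀ lam : ℕ, 1 ≤ lam → ∃ s₀, ∀ s, s₀ ≤ s → ∃ D : Finset G,
      ∀ u, u ≠ s → (lam * (K u).card < (K s).card) ∨
        (∀ x ∈ K u, lam * (K s).card < ((D * {x}) ∩ K u).card)) :
    ∀ lam : ℕ, 1 ≤ lam → ∃ s₀, ∀ s, s₀ ≤ s → s ∉ S' →
      ¬ Wreg (Xset K E S') lam ((K s).card) := by
  classical
  intro lam hlam
  obtain ⟨s₀, hs₀⟩ := HB lam hlam
  refine ⟨s₀, fun s hss₀ hsS' hW => ?_⟩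
  obtain ⟨D, hD⟩ := hs₀ s hss₀
  obtain ⟨Φ, hΦ⟩ := hW
  obtain ⟨N, hN⟩ := sep_blob K E hEmono hEsymm hEexh (Φ ∪ D)
  have hWit := hΦ (Φ ∪ D) Finset.subset_union_left
  apply hWit
  apply Set.Finite.subset (Set.Finite.biUnion (Set.finite_Iio N)
    (fun n _ => ((K (tau n)).finite_toSet).mul (Set.finite_singleton (xs K E n))))
  rintro x ⟨hxX, hlow, hup⟩
  obtain ⟨n, htn, a, ha, rfl⟩ := hxX
  by_cases hnN : n < N
  · exact Set.mem_biUnion hnN (by rw [Set.mul_singleton]; exact ⟨a, by simpa using ha, rfl⟩)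
  exfalso
  push_neg at hnN
  have hus : tau n ≠ s := fun h => hsS' (h ▸ htn)
  rcases hD (tau n) hus with hsmall | hbreak
  · -- small cluster: the Φ-ball is inside the cluster
    have hsub : ballIn (Xset K E S') Φ (a * xs K E n) ⊆ (K (tau n) : Set G) * {xs K E n} := by
      intro z hz
      obtain ⟨hblob, m, htm, b, hbm, rfl⟩ := hz
      by_cases hmn : m = n
      · subst hmn
        rw [Set.mul_singleton]
        exact ⟨b, by simpa using hbm, rfl⟩
      · exfalso
        exact hN hmn (le_trans hnN (le_max_right m n)) a ha b hbm
          (blob_mono Finset.subset_union_left hblob)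
    have hcard : (ballIn (Xset K E S') Φ (a * xs K E n)).ncard ≤ (K (tau n)).card := by
      calc (ballIn (Xset K E S') Φ (a * xs K E n)).ncard
          ≤ ((K (tau n) : Set G) * {xs K E n}).ncard :=
            Set.ncard_le_ncard hsub (((K (tau n)).finite_toSet).mul (Set.finite_singleton _))
        _ = (K (tau n)).card := cluster_ncard K E n
    have : (K s).card ≤ lam * (K (tau n)).card :=
      le_trans hlow (Nat.mul_le_mul_left _ hcard)
    omega
  · -- big cluster: the Ψ-ball is too large
    have hsub : (fun t => t * xs K E n) '' ((D * {a}) ∩ K (tau n) : Finset G) ⊆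
        ballIn (Xset K E S') (Φ ∪ D) (a * xs K E n) := by
      rintro _ ⟨t, ht, rfl⟩
      simp only [Finset.coe_inter, Set.mem_inter_iff, Finset.mem_coe] at ht
      obtain ⟨htD, htK⟩ := ht
      obtain ⟨d, hd, a', ha', hda⟩ := Finset.mem_mul.mp htD
      rw [Finset.mem_singleton] at ha'
      subst ha'
      refine mem_ballIn.mpr ⟨Or.inr ⟨d, Finset.mem_union_right _ hd, ?_⟩,
        ⟨n, htn, t, htK, rfl⟩⟩
      rw [← hda]; group
    have hcard : lam * (K s).card < (ballIn (Xset K E S') (Φ ∪ D) (a * xs K E n)).ncard := by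
      calc lam * (K s).card < ((D * {a}) ∩ K (tau n)).card := hbreak a ha
        _ = (((D * {a}) ∩ K (tau n) : Finset G) : Set G).ncard := (Set.ncard_coe_finset _).symm
        _ = ((fun t => t * xs K E n) '' ((D * {a}) ∩ K (tau n) : Finset G)).ncard :=
            (Set.ncard_image_of_injective _ (fun u v h => mul_right_cancel h)).symm
        _ ≤ (ballIn (Xset K E S') (Φ ∪ D) (a * xs K E n)).ncard :=
            Set.ncard_le_ncard hsub (finite_ballIn _ _ _)
    omega

end Clusters

end CGP

set_option maxHeartbeats 1000000
namespace CGP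

section Construction

variable {G : Type*} [Group G] [DecidableEq G] [Infinite G]

set_option maxHeartbeats 1000000 in
lemma pow_ball_lower (Φ₀ : Finset G) (hsym : Φ₀⁻¹ = Φ₀) {j k : ℕ} (hjk : j ≤ k)
    {x : G} (hx : x ∈ Φ₀ ^ k) :
    (Φ₀ ^ j).card ≤ ((Φ₀ ^ (2 * j) * {x}) ∩ Φ₀ ^ k).card := by
  have hx' : x ∈ Φ₀ ^ j * Φ₀ ^ (k - j) := by
    rw [← pow_add, Nat.add_sub_cancel' hjk]; exact hx
  obtain ⟨b, hb, y, hy, hby⟩ := Finset.mem_mul.mp hx'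
  have hsub : Φ₀ ^ j * {y} ⊆ (Φ₀ ^ (2 * j) * {x}) ∩ Φ₀ ^ k := by
    intro z hz
    obtain ⟨a, ha, w, hw, haw⟩ := Finset.mem_mul.mp hz
    rw [Finset.mem_singleton] at hw
    rw [Finset.mem_inter]
    constructor
    · have hbinv : b⁻¹ ∈ Φ₀ ^ j := by
        rw [← hsym, inv_pow]
        exact Finset.inv_mem_inv hb
      have hmem : a * b⁻¹ ∈ Φ₀ ^ (2 * j) := by
        rw [two_mul, pow_add]
        exact Finset.mul_mem_mul ha hbinv
      have hz' : z = (a * b⁻¹) * x := by rw [← haw, hw, ← hby]; group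
      rw [hz']
      exact Finset.mul_mem_mul hmem (Finset.mem_singleton_self x)
    · have hz' : z = a * y := by rw [← haw, hw]
      rw [hz', ← Nat.add_sub_cancel' hjk, pow_add]
      exact Finset.mul_mem_mul ha hy
  calc (Φ₀ ^ j).card = (Φ₀ ^ j * {y}).card := by
        rw [Finset.mul_singleton, Finset.card_smul_finset]
    _ ≤ _ := Finset.card_le_card hsub

/-- The key construction: a family of finite "cluster shapes" with superexponentially
growing cardinalities such that every much larger shape is uniformly `D`-dense in itself. -/
lemma exists_cluster_family :
    ∃ K : ℕ → Finset G, (∀ u, (1 : G) ∈ K u) ∧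
      ∀ lam : ℕ, 1 ≤ lam → ∃ s₀, ∀ s, s₀ ≤ s → ∃ D : Finset G,
        ∀ u, u ≠ s → (lam * (K u).card < (K s).card) ∨
          (∀ x ∈ K u, lam * (K s).card < ((D * {x}) ∩ K u).card) := by
  classical
  by_cases hLF : ∀ Φ : Finset G, ((Subgroup.closure (Φ : Set G) : Subgroup G) : Set G).Finite
  · -- locally finite case: nested finite subgroups
    have hbig : ∀ A : Finset G, ∃ W : Finset G,
        2 ^ (A.card + 1) * A.card ^ 2 + 1 ≤ W.card := by
      intro A
      obtain ⟨W, _, hW⟩ := Infinite.exists_superset_card_eq (∅ : Finset G)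
        (2 ^ (A.card + 1) * A.card ^ 2 + 1) (by simp)
      exact ⟨W, le_of_eq hW.symm⟩
    have hAex : ∃ A : ℕ → Finset G, (∀ u, (1 : G) ∈ A u) ∧
        (∀ u, ∀ a ∈ A u, ∀ b ∈ A u, a * b ∈ A u) ∧
        (∀ u v : ℕ, u ≤ v → A u ⊆ A v) ∧
        (∀ u, 2 ^ ((A u).card + 1) * (A u).card ^ 2 + 1 ≤ (A (u + 1)).card) := by
      let clF : Finset G → Finset G := fun T => (hLF T).toFinset
      let T : ℕ → Finset G := fun u => Nat.rec (motive := fun _ => Finset G) ∅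
        (fun _ Tu => clF Tu ∪ Classical.choose (hbig (clF Tu))) u
      let A : ℕ → Finset G := fun u => clF (T u)
      have hTsucc : ∀ u, T (u + 1) = A u ∪ Classical.choose (hbig (A u)) := fun u => rfl
      have hmemA : ∀ u (g : G), g ∈ A u ↔ g ∈ Subgroup.closure ((T u : Set G)) := by
        intro u g
        constructor
        · intro h
          have := (Set.Finite.mem_toFinset _).mp h
          exact this
        · intro h
          exact (Set.Finite.mem_toFinset _).mpr h
      have h1A : ∀ u, (1 : G) ∈ A u := fun u => (hmemA u 1).mpr (one_mem _)
      have hmulA : ∀ u, ∀ a ∈ A u, ∀ b ∈ A u, a * b ∈ A u := fun u a ha b hb =>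
        (hmemA _ _).mpr (mul_mem ((hmemA _ _).mp ha) ((hmemA _ _).mp hb))
      have hTmono : ∀ u, T u ⊆ T (u + 1) := by
        intro u g hg
        rw [hTsucc]
        exact Finset.mem_union_left _ ((hmemA u g).mpr (Subgroup.subset_closure hg))
      have hTchain : ∀ {u v : ℕ}, u ≤ v → T u ⊆ T v := by
        intro u v huv
        induction v with
        | zero => have : u = 0 := by omega
                  subst this; exact fun _ h => h
        | succ v ih =>
          rcases Nat.lt_or_ge u (v + 1) with h | h
          · exact fun g hg => hTmono v (ih (by omega) hg)
          · have : u = v + 1 := by omega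
            subst this; exact fun _ h => h
      have hAmono : ∀ {u v : ℕ}, u ≤ v → A u ⊆ A v := by
        intro u v huv g hg
        exact (hmemA v g).mpr (Subgroup.closure_mono (by exact_mod_cast hTchain huv)
          ((hmemA u g).mp hg))
      have hcA : ∀ u, 2 ^ ((A u).card + 1) * (A u).card ^ 2 + 1 ≤ (A (u + 1)).card := by
        intro u
        have hW := Classical.choose_spec (hbig (A u))
        have hWT : Classical.choose (hbig (A u)) ⊆ A (u + 1) := by
          intro g hg
          refine (hmemA (u + 1) g).mpr (Subgroup.subset_closure ?_)
          rw [hTsucc]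
          exact_mod_cast Finset.mem_union_right _ hg
        exact le_trans hW (Finset.card_le_card hWT)
      exact ⟨A, h1A, hmulA, fun u v h => hAmono h, hcA⟩
    obtain ⟨A, h1A, hmulA, hAmono', hcA⟩ := hAex
    have hAmono : ∀ {u v : ℕ}, u ≤ v → A u ⊆ A v := fun {u v} h => hAmono' u v h
    set c : ℕ → ℕ := fun u => (A u).card with hcdef
    have hc1 : ∀ u, 1 ≤ c u := fun u => Finset.card_pos.mpr ⟨1, h1A u⟩
    have hcmono : ∀ {u v : ℕ}, u ≤ v → c u ≤ c v := fun huv => Finset.card_le_card (hAmono huv)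
    have hcu_ge : ∀ u, u + 1 ≤ c u := by
      intro u
      induction u with
      | zero => exact hc1 0
      | succ u ih =>
        have h : 2 ^ (c u + 1) * (c u) ^ 2 + 1 ≤ c (u + 1) := hcA u
        have h2 : 1 ≤ 2 ^ (c u + 1) := Nat.one_le_two_pow
        have h3 : c u * c u ≥ c u := Nat.le_mul_of_pos_left _ (hc1 u)
        have hsq : (c u) ^ 2 = c u * c u := sq (c u) ▸ rfl
        nlinarith [hc1 u]
    have hGr : ∀ u, 2 ^ (u + 1) * (c u) ^ 2 < c (u + 1) := by
      intro u
      have h : 2 ^ (c u + 1) * (c u) ^ 2 + 1 ≤ c (u + 1) := hcA u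
      have hle : 2 ^ (u + 1) ≤ 2 ^ (c u + 1) := Nat.pow_le_pow_right (by omega) (by
        have := hcu_ge u; omega)
      have h5 : 2 ^ (u + 1) * (c u) ^ 2 ≤ 2 ^ (c u + 1) * (c u) ^ 2 :=
        Nat.mul_le_mul_right _ hle
      omega
    refine ⟨A, h1A, ?_⟩
    intro lam hlam
    refine ⟨lam + 1, fun s hss => ?_⟩
    have hs1 : 1 ≤ s := by omega
    have h2s : lam < 2 ^ s :=
      lt_of_lt_of_le (Nat.lt_two_pow_self (n := lam)) (Nat.pow_le_pow_right (by omega) (by omega))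
    have hex : ∃ v, lam * c s < c v := by
      refine ⟨s + 1, ?_⟩
      have h1 : lam * c s < 2 ^ (s + 1) * (c s) ^ 2 := by
        have h2 : lam < 2 ^ (s + 1) :=
          lt_of_lt_of_le h2s (Nat.pow_le_pow_right (by omega) (by omega))
        have hsq : (c s) ^ 2 = c s * c s := by ring
        calc lam * c s < 2 ^ (s + 1) * c s := by
              exact mul_lt_mul_of_pos_right h2 (by have := hc1 s; omega)
          _ ≤ 2 ^ (s + 1) * (c s * c s) := by
              have : c s ≤ c s * c s := Nat.le_mul_of_pos_left _ (hc1 s)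
              exact Nat.mul_le_mul_left _ this
          _ = 2 ^ (s + 1) * (c s) ^ 2 := by rw [hsq]
      exact lt_trans h1 (hGr s)
    refine ⟨A (Nat.find hex), fun u hu => ?_⟩
    rcases lt_or_gt_of_ne hu with hlt | hgt
    · left
      have hcu : c u ≤ c (s - 1) := hcmono (by omega)
      have hGr' := hGr (s - 1)
      rw [Nat.sub_add_cancel hs1] at hGr'
      have hstep1 : lam * c u ≤ 2 ^ s * c (s - 1) := Nat.mul_le_mul (le_of_lt h2s) hcu
      have hstep2 : 2 ^ s * c (s - 1) ≤ 2 ^ s * (c (s - 1)) ^ 2 := by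
        have hsq : (c (s - 1)) ^ 2 = c (s - 1) * c (s - 1) := by ring
        rw [hsq]
        exact Nat.mul_le_mul_left _ (Nat.le_mul_of_pos_left _ (hc1 (s - 1)))
      exact lt_of_le_of_lt (le_trans hstep1 hstep2) hGr'
    · right
      intro x hx
      have hPu : lam * c s < c u := by
        have hcu : c (s + 1) ≤ c u := hcmono (by omega : s + 1 ≤ u)
        have h1 : lam * c s < 2 ^ (s + 1) * (c s) ^ 2 := by
          have h2 : lam < 2 ^ (s + 1) :=
            lt_of_lt_of_le h2s (Nat.pow_le_pow_right (by omega) (by omega))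
          have hsq : (c s) ^ 2 = c s * c s := by ring
          calc lam * c s < 2 ^ (s + 1) * c s :=
                mul_lt_mul_of_pos_right h2 (by have := hc1 s; omega)
            _ ≤ 2 ^ (s + 1) * (c s * c s) :=
                Nat.mul_le_mul_left _ (Nat.le_mul_of_pos_left _ (hc1 s))
            _ = 2 ^ (s + 1) * (c s) ^ 2 := by rw [hsq]
        exact lt_of_lt_of_le (lt_trans h1 (hGr s)) hcu
      have hu₀ : Nat.find hex ≤ u := Nat.find_min' hex hPu
      have hDsub : A (Nat.find hex) * {x} ⊆ A u := by
        intro z hz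
        obtain ⟨d, hd, x', hx', hdx⟩ := Finset.mem_mul.mp hz
        rw [Finset.mem_singleton] at hx'
        have hzdx : z = d * x := by rw [← hdx, hx']
        rw [hzdx]
        exact hmulA u d (hAmono hu₀ hd) x hx
      have hcard : ((A (Nat.find hex) * {x}) ∩ A u).card = (A (Nat.find hex)).card := by
        rw [Finset.inter_eq_left.mpr hDsub, Finset.mul_singleton, Finset.card_smul_finset]
      rw [hcard]
      exact Nat.find_spec hex
  · -- there is an infinite finitely generated subgroup
    push_neg at hLF
    obtain ⟨Φ, hΦinf⟩ := hLF
    set Φ₀ : Finset G := insert (1 : G) (Φ ∪ Φ⁻¹) with hΦ₀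
    have h1 : (1 : G) ∈ Φ₀ := Finset.mem_insert_self _ _
    have hsym : Φ₀⁻¹ = Φ₀ := by
      ext g
      rw [Finset.mem_inv']
      simp only [hΦ₀, Finset.mem_insert, Finset.mem_union, Finset.mem_inv', inv_inv,
        inv_eq_one]
      tauto
    have hmonopow : ∀ {a b : ℕ}, a ≤ b → Φ₀ ^ a ⊆ Φ₀ ^ b :=
      fun hab => Finset.pow_subset_pow_right h1 hab
    have hgrow : ∀ B : ℕ, ∃ k, B < (Φ₀ ^ k).card := by
      by_contra hbd
      push_neg at hbd
      obtain ⟨B, hB⟩ := hbd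
      have hstab : ∃ k, (Φ₀ ^ (k + 1)).card ≤ (Φ₀ ^ k).card := by
        by_contra hs
        push_neg at hs
        have hmono : ∀ k : ℕ, k + (Φ₀ ^ 0).card ≤ (Φ₀ ^ k).card := by
          intro k
          induction k with
          | zero => simp
          | succ k ih => have := hs k; omega
        have h1' := hmono (B + 1)
        have h2' := hB (B + 1)
        have h3' : 1 ≤ (Φ₀ ^ 0).card := Finset.card_pos.mpr ⟨1, Finset.one_mem_pow h1⟩
        omega
      obtain ⟨k, hk⟩ := hstab
      have heq : Φ₀ ^ (k + 1) = Φ₀ ^ k :=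
        (Finset.eq_of_subset_of_card_le (hmonopow (Nat.le_succ k)) hk).symm
      have hstep : ∀ j : ℕ, Φ₀ ^ (k + j) = Φ₀ ^ k := by
        intro j
        induction j with
        | zero => rfl
        | succ j ih =>
          calc Φ₀ ^ (k + (j + 1)) = Φ₀ ^ (k + j) * Φ₀ := by rw [← pow_succ, Nat.add_succ]
            _ = Φ₀ ^ k * Φ₀ := by rw [ih]
            _ = Φ₀ ^ (k + 1) := (pow_succ Φ₀ k).symm
            _ = Φ₀ ^ k := heq
      have hmulmem : ∀ a ∈ Φ₀ ^ k, ∀ b ∈ Φ₀ ^ k, a * b ∈ Φ₀ ^ k := by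
        intro a ha b hb
        have h := Finset.mul_mem_mul ha hb
        rwa [← pow_add, hstep k] at h
      have hinvmem : ∀ a ∈ Φ₀ ^ k, a⁻¹ ∈ Φ₀ ^ k := by
        intro a ha
        have h := Finset.inv_mem_inv ha
        rwa [← inv_pow, hsym] at h
      set H : Subgroup G :=
        { carrier := (Φ₀ ^ k : Finset G)
          mul_mem' := fun ha hb => hmulmem _ ha _ hb
          one_mem' := by exact_mod_cast Finset.one_mem_pow h1
          inv_mem' := fun ha => hinvmem _ ha } with hH
      have hcl : Subgroup.closure (Φ : Set G) ≤ H := by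
        rw [Subgroup.closure_le]
        intro g hg
        have hgΦ₀ : g ∈ Φ₀ := Finset.mem_insert_of_mem (Finset.mem_union_left _ (by exact_mod_cast hg))
        have : g ∈ Φ₀ ^ (k + 1) := hmonopow (by omega : 1 ≤ k + 1) (by rwa [pow_one])
        rw [hstep 1] at this
        exact_mod_cast this
      exact hΦinf (Set.Finite.subset (Φ₀ ^ k).finite_toSet hcl)
    -- build the exponent sequence
    set β := Φ₀.card with hβdef
    have hβ1 : 1 ≤ β := Finset.card_pos.mpr ⟨1, h1⟩
    have hkex : ∃ k : ℕ → ℕ,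
        ∀ u, 2 ^ (u + 1) * β * (Φ₀ ^ k u).card ^ 2 < (Φ₀ ^ k (u + 1)).card := by
      refine ⟨fun u => Nat.rec (motive := fun _ => ℕ) 1
        (fun u ih => Nat.find (hgrow (2 ^ (u + 1) * β * (Φ₀ ^ ih).card ^ 2))) u, fun u => ?_⟩
      exact Nat.find_spec (hgrow _)
    obtain ⟨kseq, hGrk⟩ := hkex
    set c : ℕ → ℕ := fun u => (Φ₀ ^ kseq u).card with hcdef
    have hGr : ∀ u, 2 ^ (u + 1) * β * (c u) ^ 2 < c (u + 1) := hGrk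
    have hc1 : ∀ u, 1 ≤ c u := fun u => Finset.card_pos.mpr ⟨1, Finset.one_mem_pow h1⟩
    have hcmono : ∀ {u v : ℕ}, u ≤ v → c u ≤ c v := by
      have hstep : ∀ u, c u ≤ c (u + 1) := by
        intro u
        have h := hGr u
        have hsq : (c u) ^ 2 = c u * c u := by ring
        have h3 : c u ≤ c u * c u := Nat.le_mul_of_pos_left _ (hc1 u)
        have h4 : c u * c u ≤ β * (c u * c u) := Nat.le_mul_of_pos_left _ hβ1
        have h5 : β * (c u * c u) ≤ 2 ^ (u + 1) * (β * (c u * c u)) :=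
          Nat.le_mul_of_pos_left _ (by positivity)
        have h6 : 2 ^ (u + 1) * (β * (c u * c u)) = 2 ^ (u + 1) * β * (c u) ^ 2 := by
          rw [hsq]; ring
        omega
      intro u v huv
      induction v with
      | zero => have : u = 0 := by omega
                subst this; exact le_refl _
      | succ v ih =>
        rcases Nat.lt_or_ge u (v + 1) with h | h
        · exact le_trans (ih (by omega)) (hstep v)
        · have : u = v + 1 := by omega
          subst this; exact le_refl _
    refine ⟨fun u => Φ₀ ^ kseq u, fun u => Finset.one_mem_pow h1, ?_⟩
    intro lam hlam
    refine ⟨lam + 1, fun s hss => ?_⟩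
    have hs1 : 1 ≤ s := by omega
    have h2s : lam < 2 ^ s :=
      lt_of_lt_of_le (Nat.lt_two_pow_self (n := lam)) (Nat.pow_le_pow_right (by omega) (by omega))
    have hjex := hgrow (lam * c s)
    set j := Nat.find hjex with hjdef
    have hjspec : lam * c s < (Φ₀ ^ j).card := Nat.find_spec hjex
    refine ⟨Φ₀ ^ (2 * j), fun u hu => ?_⟩
    rcases lt_or_gt_of_ne hu with hlt | hgt
    · left
      have hcu : c u ≤ c (s - 1) := hcmono (by omega)
      have hGr' := hGr (s - 1)
      rw [Nat.sub_add_cancel hs1] at hGr'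
      have hstep1 : lam * c u ≤ 2 ^ s * c (s - 1) := Nat.mul_le_mul (le_of_lt h2s) hcu
      have hstep2 : 2 ^ s * c (s - 1) ≤ 2 ^ s * β * (c (s - 1)) ^ 2 := by
        have hsq : (c (s - 1)) ^ 2 = c (s - 1) * c (s - 1) := by ring
        calc 2 ^ s * c (s - 1) ≤ 2 ^ s * (β * (c (s - 1) * c (s - 1))) := by
              refine Nat.mul_le_mul_left _ ?_
              calc c (s - 1) ≤ c (s - 1) * c (s - 1) := Nat.le_mul_of_pos_left _ (hc1 _)
                _ ≤ β * (c (s - 1) * c (s - 1)) := Nat.le_mul_of_pos_left _ hβ1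
          _ = 2 ^ s * β * (c (s - 1)) ^ 2 := by rw [hsq]; ring
      exact lt_of_le_of_lt (le_trans hstep1 hstep2) hGr'
    · right
      intro x hx
      have hbig : β * (lam * c s) < c u := by
        have hcu : c (s + 1) ≤ c u := hcmono (by omega : s + 1 ≤ u)
        have h2 : lam + 1 ≤ 2 ^ (s + 1) := by
          have h3 : 2 ^ s ≤ 2 ^ (s + 1) := Nat.pow_le_pow_right (by omega) (by omega)
          omega
        have h4 : β * (lam * c s) < 2 ^ (s + 1) * β * (c s) ^ 2 := by
          have hsq : (c s) ^ 2 = c s * c s := by ring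
          calc β * (lam * c s) < β * (2 ^ (s + 1) * c s) := by
                refine mul_lt_mul_of_pos_left ?_ (by omega)
                exact mul_lt_mul_of_pos_right (by omega) (by have := hc1 s; omega)
            _ ≤ β * (2 ^ (s + 1) * (c s * c s)) := by
                refine Nat.mul_le_mul_left _ (Nat.mul_le_mul_left _ ?_)
                exact Nat.le_mul_of_pos_left _ (hc1 s)
            _ = 2 ^ (s + 1) * β * (c s) ^ 2 := by rw [hsq]; ring
        exact lt_of_lt_of_le h4 (le_trans (le_of_lt (hGr s)) hcu)
      have hjne : j ≠ 0 := by
        intro h0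
        rw [h0, pow_zero] at hjspec
        have hone : (1 : Finset G).card = 1 := Finset.card_one
        have hge : 1 ≤ lam * c s := by
          have := Nat.mul_le_mul hlam (hc1 s)
          simpa using this
        omega
      have hjpred : (Φ₀ ^ (j - 1)).card ≤ lam * c s :=
        not_lt.mp (Nat.find_min hjex (show j - 1 < j by omega))
      have hjcard : (Φ₀ ^ j).card ≤ lam * c s * β := by
        have hsucc : Φ₀ ^ j = Φ₀ ^ (j - 1) * Φ₀ := by
          rw [← pow_succ, Nat.sub_add_cancel (by omega)]
        calc (Φ₀ ^ j).card = (Φ₀ ^ (j - 1) * Φ₀).card := by rw [hsucc]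
          _ ≤ (Φ₀ ^ (j - 1)).card * β := Finset.card_mul_le
          _ ≤ lam * c s * β := Nat.mul_le_mul_right _ hjpred
      have hjk : j ≤ kseq u := by
        by_contra hcon
        push_neg at hcon
        have hsubset : Φ₀ ^ kseq u ⊆ Φ₀ ^ j := hmonopow (by omega)
        have hle : c u ≤ (Φ₀ ^ j).card := Finset.card_le_card hsubset
        have heq : lam * c s * β = β * (lam * c s) := by ring
        omega
      calc lam * c s < (Φ₀ ^ j).card := hjspec
        _ ≤ ((Φ₀ ^ (2 * j) * {x}) ∩ Φ₀ ^ kseq u).card := pow_ball_lower Φ₀ hsym hjk hx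

end Construction

end CGP

namespace CGP

section Branch

/-- the almost disjoint family: initial segments of a boolean sequence, encoded -/
def branchSet (r : ℕ → Bool) : Set ℕ :=
  Set.range (fun n => Encodable.encode (List.ofFn (fun i : Fin n => r i)))

lemma branch_inj_aux (r : ℕ → Bool) :
    Function.Injective (fun n => Encodable.encode (List.ofFn (fun i : Fin n => r i))) := by
  intro m n h
  have hl := Encodable.encode_injective h
  simpa [List.length_ofFn] using congrArg List.length hl

lemma branchSet_infinite (r : ℕ → Bool) : (branchSet r).Infinite :=
  Set.infinite_range_of_injective (branch_inj_aux r)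

lemma branchSet_inter_finite {r r' : ℕ → Bool} (h : r ≠ r') :
    (branchSet r ∩ branchSet r').Finite := by
  obtain ⟨d, hd⟩ := Function.ne_iff.mp h
  apply Set.Finite.subset
    ((Set.finite_Iic d).image (fun n => Encodable.encode (List.ofFn (fun i : Fin n => r i))))
  rintro x ⟨⟨n, rfl⟩, ⟨m, hm⟩⟩
  refine Set.mem_image_of_mem _ ?_
  have hl := Encodable.encode_injective hm
  have hlen : m = n := by simpa [List.length_ofFn] using congrArg List.length hl
  subst hlen
  have hfe : (fun i : Fin m => r' i) = fun i : Fin m => r i := List.ofFn_injective hl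
  rw [Set.mem_Iic]
  by_contra hnd
  push_neg at hnd
  have : r' d = r d := congrFun hfe ⟨d, by omega⟩
  exact hd this.symm

lemma branch_diff_ne {r r' : ℕ → Bool} (hner : r ≠ r')
    (hfin : (branchSet r \ branchSet r').Finite) : False := by
  have hint := branchSet_inter_finite hner
  have hsub : branchSet r ⊆ (branchSet r \ branchSet r') ∪ (branchSet r ∩ branchSet r') := by
    intro x hx
    by_cases hx' : x ∈ branchSet r'
    · exact Or.inr ⟨hx, hx'⟩
    · exact Or.inl ⟨hx, hx'⟩
  exact branchSet_infinite r (Set.Finite.subset (hfin.union hint) hsub)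

end Branch

lemma coarselyEquiv_refl {G : Type*} [Group G] (X : Set G) : CoarselyEquiv X X :=
  ⟨X, X, ⟨subset_rfl, ∅, by simp⟩, ⟨subset_rfl, ∅, by simp⟩, Equiv.refl _,
    ⟨fun F => ⟨F, fun _ _ h => h⟩, fun F => ⟨F, fun _ _ h => h⟩⟩⟩

end CGP

/-- For every countably infinite group `G`, there are `2^ℵ₀` nonempty subsets of `G`
that are pairwise non-coarsely-equivalent. -/
theorem countable_group_continuum_coarse_subsets
    (G : Type*) [Group G] [Countable G] [Infinite G] :
    ∃ 𝔉 : Set (Set G),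
      (∀ A ∈ 𝔉, A.Nonempty) ∧
      Cardinal.mk 𝔉 = 2 ^ Cardinal.aleph0 ∧
      ∀ A ∈ 𝔉, ∀ B ∈ 𝔉, A ≠ B → ¬ CoarselyEquiv A B := by
  classical
  letI : DecidableEq G := Classical.decEq G
  obtain ⟨e, he⟩ := exists_surjective_nat G
  open CGP in
  set E : ℕ → Finset G :=
    fun n => ((Finset.range (n + 1)).image e) ∪ ((Finset.range (n + 1)).image e)⁻¹ ∪ {1}
    with hEdef
  have hE1 : ∀ n, (1 : G) ∈ E n := fun n => by simp [hEdef]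
  have hEmono : ∀ {m n : ℕ}, m ≤ n → E m ⊆ E n := by
    intro m n hmn g hg
    simp only [hEdef, Finset.mem_union, Finset.mem_image, Finset.mem_inv',
      Finset.mem_range, Finset.mem_singleton] at hg ⊢
    rcases hg with (⟨i, hi, rfl⟩ | ⟨i, hi, hie⟩) | h
    · exact Or.inl (Or.inl ⟨i, by omega, rfl⟩)
    · exact Or.inl (Or.inr ⟨i, by omega, hie⟩)
    · exact Or.inr h
  have hEsymm : ∀ n, (E n)⁻¹ = E n := by
    intro n
    ext g
    rw [Finset.mem_inv']
    simp only [hEdef, Finset.mem_union, Finset.mem_image, Finset.mem_inv',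
      Finset.mem_range, Finset.mem_singleton, inv_inv, inv_eq_one]
    constructor
    · rintro ((⟨i, hi, hie⟩ | ⟨i, hi, hie⟩) | h)
      · exact Or.inl (Or.inr ⟨i, hi, hie⟩)
      · exact Or.inl (Or.inl ⟨i, hi, hie⟩)
      · exact Or.inr h
    · rintro ((⟨i, hi, hie⟩ | ⟨i, hi, hie⟩) | h)
      · exact Or.inl (Or.inr ⟨i, hi, hie⟩)
      · exact Or.inl (Or.inl ⟨i, hi, hie⟩)
      · exact Or.inr h
  have hEexh : ∀ F : Finset G, ∃ N, F ⊆ E N := by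
    intro F
    have hsel : ∀ g : G, ∃ i, e i = g := he
    choose idx hidx using hsel
    refine ⟨F.sup idx, fun g hg => ?_⟩
    have hle : idx g ≤ F.sup idx := Finset.le_sup hg
    simp only [hEdef, Finset.mem_union, Finset.mem_image, Finset.mem_range]
    exact Or.inl (Or.inl ⟨idx g, by omega, hidx g⟩)
  obtain ⟨K, hK1, HB⟩ := CGP.exists_cluster_family (G := G)
  have hdiff : ∀ S S' : Set ℕ,
      CoarselyEquiv (CGP.Xset K E S) (CGP.Xset K E S') → (S \ S').Finite := by
    intro S S' hCE
    obtain ⟨k, hk1, htr⟩ := CGP.W_transfer hCE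
    obtain ⟨s₀, hB⟩ := CGP.claimB K E hK1 hE1 hEmono hEsymm hEexh S' HB k hk1
    apply Set.Finite.subset (Set.finite_Iio s₀)
    intro s hs
    rw [Set.mem_Iio]
    by_contra hlt
    push_neg at hlt
    exact hB s hlt hs.2
      (htr _ (CGP.claimA K E hK1 hE1 hEmono hEsymm hEexh S hs.1))
  refine ⟨Set.range (fun r : ℕ → Bool => CGP.Xset K E (CGP.branchSet r)), ?_, ?_, ?_⟩
  · rintro A ⟨r, rfl⟩
    obtain ⟨n, hn⟩ : ∃ n, CGP.tau n ∈ CGP.branchSet r := by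
      refine ⟨Nat.pair (Encodable.encode (List.ofFn (fun i : Fin 0 => r i))) 0, ?_⟩
      have : CGP.tau (Nat.pair (Encodable.encode (List.ofFn (fun i : Fin 0 => r i))) 0)
          = Encodable.encode (List.ofFn (fun i : Fin 0 => r i)) := by
        simp [CGP.tau, Nat.unpair_pair]
      rw [this]
      exact ⟨0, rfl⟩
    exact ⟨CGP.xs K E n, n, hn, 1, hK1 _, (one_mul _).symm⟩
  · have hinj : Function.Injective (fun r : ℕ → Bool => CGP.Xset K E (CGP.branchSet r)) := by
      intro r r' h
      by_contra hner
      have h' : CGP.Xset K E (CGP.branchSet r) = CGP.Xset K E (CGP.branchSet r') := h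
      have hCE : CoarselyEquiv (CGP.Xset K E (CGP.branchSet r))
          (CGP.Xset K E (CGP.branchSet r')) := by
        rw [h']
        exact CGP.coarselyEquiv_refl _
      exact CGP.branch_diff_ne hner (hdiff _ _ hCE)
    have h1 := Cardinal.mk_range_eq_of_injective hinj
    have h2 : Cardinal.mk (ℕ → Bool) = 2 ^ Cardinal.aleph0 := by
      rw [Cardinal.mk_arrow, Cardinal.mk_bool, Cardinal.mk_nat, Cardinal.lift_id,
        Cardinal.lift_id]
    rw [h2, Cardinal.lift_power, Cardinal.lift_two, Cardinal.lift_aleph0,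
      Cardinal.lift_uzero] at h1
    exact h1
  · rintro A ⟨r, rfl⟩ B ⟨r', rfl⟩ hne hCE
    have hner : r ≠ r' := fun h => hne (by rw [h])
    exact CGP.branch_diff_ne hner (hdiff _ _ hCE)
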